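/- arXiv:2305.07964 — 2 statements merged into one kernel-verified Lean document; each statement's English description precedes it below -/
import Mathlib

section
/- Let $\alpha\ge 2$ be a real number and let $u\colon\mathbb{R}^3\to\mathbb{R}^3$ be a $C^\infty$ compactly supported vector field. Then $-\int_{\mathbb{R}^3}|u(x)|^{\alpha-1}\,u(x)\cdot\Delta u(x)\,dx \;=\; \int_{\mathbb{R}^3}|u(x)|^{\alpha-1}\,|\nabla u(x)|^2\,dx \;+\; \frac{4(\alpha-1)}{(\alpha+1)^2}\int_{\mathbb{R}^3}\big|\nabla\big(|u(x)|^{\frac{\alpha+1}{2}}\big)\big|^2\,dx$. -/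
open MeasureTheory Set RealInnerProductSpace

noncomputable section

/-- Euclidean 3-space. -/
abbrev E3 : Type := EuclideanSpace ℝ (Fin 3)

/-- Partial derivative `∂_{x_j} f` at `x`. -/
def pd {F : Type*} [NormedAddCommGroup F] [NormedSpace ℝ F]
    (f : E3 → F) (j : Fin 3) (x : E3) : F :=
  fderiv ℝ f x (EuclideanSpace.single j 1)

/-- (Componentwise) Laplacian `Δ f` at `x`. -/
def lap {F : Type*} [NormedAddCommGroup F] [NormedSpace ℝ F]
    (f : E3 → F) (x : E3) : F :=
  ∑ j, pd (pd f j) j x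

/-- Divergence `div v` at `x`. -/
def div3 (v : E3 → E3) (x : E3) : ℝ := ∑ j, pd v j x j

/-- Advection term `(u·∇)w` at `x`. -/
def adv {F : Type*} [NormedAddCommGroup F] [NormedSpace ℝ F]
    (u : E3 → E3) (w : E3 → F) (x : E3) : F :=
  ∑ j, u x j • pd w j x

/-- Gradient `∇f` of a scalar function at `x`. -/
def grad (f : E3 → ℝ) (x : E3) : E3 :=
  ∑ j, pd f j x • EuclideanSpace.single j 1

/-- `div (v ⊗ v)` at `x`, whose `k`-th component is `∑_j ∂_{x_j} (v_j v_k)`. -/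
def divT (v : E3 → E3) (x : E3) : E3 :=
  ∑ j, pd (fun y => v y j • v y) j x

/-- Pointwise squared norm of the full gradient, `|∇f|² = ∑_{j,k} (∂_{x_j} f_k)²`. -/
def gradSq {F : Type*} [NormedAddCommGroup F] [NormedSpace ℝ F]
    (f : E3 → F) (x : E3) : ℝ :=
  ∑ j, ‖pd f j x‖ ^ 2


section Aux

open Filter Asymptotics Topology

/-- Integration by parts with nothing on the other side: the integral of a partial
derivative of an integrable differentiable function with integrable derivative vanishes. -/
lemma integral_pd_eq_zero' {f : E3 → ℝ} (hf : Differentiable ℝ f)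
    (hfi : Integrable f) (v : E3)
    (hf'i : Integrable (fun x => fderiv ℝ f x v)) :
    ∫ x, fderiv ℝ f x v = 0 := by
  have h := integral_mul_fderiv_eq_neg_fderiv_mul_of_integrable (μ := volume)
    (f := f) (g := fun _ => (1:ℝ)) (v := v)
    (by simpa using hf'i) (by simp) (by simpa using hfi) (fun x _ => hf x) (fun x _ => differentiableAt_const (1:ℝ))
  simp only [fderiv_fun_const, Pi.zero_apply, ContinuousLinearMap.zero_apply, mul_zero, mul_one,
    integral_zero] at h
  linarith [h]

/-- A function dominated by `C * ‖u y‖ ^ c` with `c > 1` has derivative `0` at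
a zero of `u`. -/
lemma hasFDerivAt_zero_of_dominated {u : E3 → E3} {f : E3 → ℝ} {x : E3}
    (hud : DifferentiableAt ℝ u x) {C c : ℝ} (hc : 1 < c) (hC : 0 ≤ C)
    (hu0 : u x = 0) (hb : ∀ y, |f y| ≤ C * ‖u y‖ ^ c) :
    HasFDerivAt f (0 : E3 →L[ℝ] ℝ) x := by
  have hc0 : c ≠ 0 := by linarith
  have hfx : f x = 0 := by
    have := hb x
    rw [hu0] at this
    simpa [Real.zero_rpow hc0] using this
  rw [hasFDerivAt_iff_isLittleO]
  simp only [hfx, sub_zero, ContinuousLinearMap.zero_apply]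
  have h1 : (fun y => ‖u y‖) =O[𝓝 x] fun y => y - x := by
    simpa [hu0] using hud.hasFDerivAt.isBigO_sub.norm_left
  have h2 : Tendsto (fun y => C * ‖u y‖ ^ (c - 1)) (𝓝 x) (𝓝 0) := by
    have hcont : Tendsto (fun y => ‖u y‖) (𝓝 x) (𝓝 0) := by
      have := (hud.continuousAt).norm
      simpa [hu0] using this.tendsto
    have hr : ContinuousAt (fun t : ℝ => t ^ (c - 1)) 0 :=
      Real.continuousAt_rpow_const 0 (c - 1) (Or.inr (by linarith))
    have := (hr.tendsto.comp hcont).const_mul C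
    simpa [Real.zero_rpow (by intro h; apply hc0; linarith [sub_eq_zero.mp h] : c - 1 ≠ 0)]
      using this
  have h3 : (fun y => C * ‖u y‖ ^ (c - 1)) =o[𝓝 x] (fun _ => (1:ℝ)) :=
    (isLittleO_one_iff ℝ).2 h2
  have h4 : (fun y => C * ‖u y‖ ^ (c - 1) * ‖u y‖) =o[𝓝 x]
      (fun y => (1:ℝ) * ‖y - x‖) := h3.mul_isBigO h1.norm_right
  have h5 : (fun y => f y) =O[𝓝 x] fun y => C * ‖u y‖ ^ (c - 1) * ‖u y‖ := by
    rw [isBigO_iff]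
    refine ⟨1, Filter.Eventually.of_forall fun y => ?_⟩
    rcases eq_or_ne (u y) 0 with h | h
    · have hy := hb y
      rw [h] at hy
      simp only [norm_zero, Real.zero_rpow hc0, mul_zero] at hy
      have : f y = 0 := abs_eq_zero.1 (le_antisymm hy (abs_nonneg _))
      simp [this, h]
    · have hpos : (0:ℝ) < ‖u y‖ := norm_pos_iff.2 h
      have heq : C * ‖u y‖ ^ (c - 1) * ‖u y‖ = C * ‖u y‖ ^ c := by
        rw [mul_assoc, ← Real.rpow_add_one (ne_of_gt hpos)]
        ring_nf
      rw [heq]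
      have h6 : ‖f y‖ ≤ C * ‖u y‖ ^ c := by simpa [Real.norm_eq_abs] using hb y
      calc ‖f y‖ ≤ C * ‖u y‖ ^ c := h6
        _ ≤ 1 * ‖C * ‖u y‖ ^ c‖ := by rw [one_mul, Real.norm_eq_abs]; exact le_abs_self _
  refine (h5.trans_isLittleO h4).trans_isBigO ?_
  rw [isBigO_iff]
  exact ⟨1, Filter.Eventually.of_forall fun y => by simp⟩

/-- Derivative of `‖u y‖ ^ c` at a point where `u x ≠ 0`, any real exponent `c`. -/
lemma hasFDerivAt_norm_comp_rpow_of_ne {u : E3 → E3} {x : E3} (hud : DifferentiableAt ℝ u x)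
    (c : ℝ) (hx : u x ≠ 0) :
    HasFDerivAt (fun y => ‖u y‖ ^ c)
      ((c * ‖u x‖ ^ (c - 2)) • ((innerSL ℝ (u x)).comp (fderiv ℝ u x))) x := by
  have hpos : (0:ℝ) < ⟪u x, u x⟫ := by
    rw [real_inner_self_eq_norm_sq]
    exact pow_pos (norm_pos_iff.2 hx) 2
  have hinner : HasFDerivAt (fun y => ⟪u y, u y⟫)
      ((fderivInnerCLM ℝ (u x, u x)).comp ((fderiv ℝ u x).prod (fderiv ℝ u x))) x :=
    hud.hasFDerivAt.inner ℝ hud.hasFDerivAt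
  have hr : HasDerivAt (fun t : ℝ => t ^ (c/2)) ((c/2) * ⟪u x, u x⟫ ^ (c/2 - 1)) ⟪u x, u x⟫ :=
    Real.hasDerivAt_rpow_const (Or.inl hpos.ne')
  have hcomp := hr.comp_hasFDerivAt x hinner
  have hfun : (fun y => (⟪u y, u y⟫ : ℝ) ^ (c/2)) = fun y => ‖u y‖ ^ c := by
    funext y
    rw [real_inner_self_eq_norm_sq, ← Real.rpow_natCast (‖u y‖) 2,
      ← Real.rpow_mul (norm_nonneg _)]
    congr 1
    push_cast
    ring
  simp only [Function.comp_def] at hcomp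
  rw [hfun] at hcomp
  refine hcomp.congr_fderiv ?_
  ext v
  simp only [ContinuousLinearMap.smul_apply, ContinuousLinearMap.comp_apply,
    ContinuousLinearMap.prod_apply, fderivInnerCLM_apply, innerSL_apply_apply, smul_eq_mul]
  have h1 : (⟪u x, u x⟫ : ℝ) ^ (c/2 - 1) = ‖u x‖ ^ (c - 2) := by
    rw [real_inner_self_eq_norm_sq, ← Real.rpow_natCast (‖u x‖) 2,
      ← Real.rpow_mul (norm_nonneg _)]
    congr 1
    push_cast
    ring
  rw [real_inner_comm ((fderiv ℝ u x) v) (u x), h1]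
  ring

end Aux

/-- For `α ≥ 2` and a smooth compactly supported vector field `u` on `ℝ³`,
the damping term tested against `-Δu` splits into two nonnegative quantities:
`-∫ |u|^{α-1} u·Δu = ∫ |u|^{α-1}|∇u|² + (4(α-1)/(α+1)²) ∫ |∇(|u|^{(α+1)/2})|²`. -/
theorem damping_term_identity (α : ℝ) (hα : 2 ≤ α) (u : E3 → E3)
    (hu : ContDiff ℝ (⊤ : ℕ∞) u) (hsupp : HasCompactSupport u) :
    -(∫ x : E3, ‖u x‖ ^ (α - 1) * ⟪u x, lap u x⟫)
      = (∫ x : E3, ‖u x‖ ^ (α - 1) * gradSq u x)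
        + (4 * (α - 1) / (α + 1) ^ 2) *
            ∫ x : E3, gradSq (fun y => ‖u y‖ ^ ((α + 1) / 2)) x := by
  classical
  have hα1 : (1:ℝ) ≤ α - 1 := by linarith
  have hα1' : α - 1 ≠ 0 := by linarith
  have hq : (1:ℝ) < (α + 1) / 2 := by linarith
  have hud : Differentiable ℝ u := hu.differentiable (by simp)
  -- first derivatives of u
  have hwC : ∀ j : Fin 3, ContDiff ℝ (⊤ : ℕ∞) (pd u j) := by
    intro j
    exact (hu.fderiv_right (m := (⊤:ℕ∞)) (by exact_mod_cast le_top)).clm_apply contDiff_const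
  have hwd : ∀ j : Fin 3, Differentiable ℝ (pd u j) := fun j => (hwC j).differentiable (by simp)
  have hwcont : ∀ j : Fin 3, Continuous (pd u j) := fun j => (hwd j).continuous
  have hw2cont : ∀ j : Fin 3, Continuous (pd (pd u j) j) := by
    intro j
    exact (((hwC j).continuous_fderiv (by simp)).clm_apply continuous_const)
  -- bound on fderiv u
  obtain ⟨C1, hC1⟩ := ((hu.continuous_fderiv (by simp))).bounded_above_of_compact_support
    (hsupp.fderiv ℝ)
  have hC1' : 0 ≤ C1 := le_trans (norm_nonneg _) (hC1 0)
  have hwb : ∀ j (x : E3), ‖pd u j x‖ ≤ C1 := by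
    intro j x
    calc ‖pd u j x‖ ≤ ‖fderiv ℝ u x‖ * ‖EuclideanSpace.single j (1:ℝ)‖ :=
          (fderiv ℝ u x).le_opNorm _
      _ ≤ C1 * 1 := by
          refine mul_le_mul (hC1 x) ?_ (norm_nonneg _) hC1'
          simp [EuclideanSpace.norm_single]
      _ = C1 := mul_one _
  -- the power function N = ‖u‖^((α+1)/2)
  set N : E3 → ℝ := fun y => ‖u y‖ ^ ((α + 1) / 2) with hN
  have hNfd : ∀ x, fderiv ℝ N x
      = (((α + 1) / 2) * ‖u x‖ ^ ((α + 1) / 2 - 2)) • ((innerSL ℝ (u x)).comp (fderiv ℝ u x)) :=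
    fun x => hud.fderiv_norm_rpow hq
  have hpdN : ∀ j x, pd N j x = ((α + 1) / 2) * ‖u x‖ ^ ((α + 1) / 2 - 2) * ⟪u x, pd u j x⟫ := by
    intro j x
    rw [pd, hNfd]
    simp [pd, mul_assoc]
  have hNC1 : ContDiff ℝ 1 N := (hu.of_le (by exact_mod_cast le_top)).norm_rpow hq
  have hNfdcont : Continuous (fderiv ℝ N) := (contDiff_one_iff_fderiv.1 hNC1).2
  have hpdNcont : ∀ j, Continuous (pd N j) := fun j => hNfdcont.clm_apply continuous_const
  have hpdN0 : ∀ j x, u x = 0 → pd N j x = 0 := by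
    intro j x hx
    rw [hpdN, hx]
    simp
  -- the functions F j and s j
  set F : Fin 3 → E3 → ℝ := fun j y => ‖u y‖ ^ (α - 1) * ⟪u y, pd u j y⟫ with hF
  set s : Fin 3 → E3 → ℝ := fun j x =>
    (4 * (α - 1) / (α + 1) ^ 2) * ‖pd N j x‖ ^ 2
      + ‖u x‖ ^ (α - 1) * (‖pd u j x‖ ^ 2 + ⟪u x, pd (pd u j) j x⟫) with hs
  have hs0 : ∀ j x, u x = 0 → s j x = 0 := by
    intro j x hx
    simp [hs, hpdN0 j x hx, hx, Real.zero_rpow hα1']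
  -- derivative of F j at points where u x ≠ 0
  have hF_ne : ∀ (j : Fin 3) (x : E3), u x ≠ 0 →
      ∃ D : E3 →L[ℝ] ℝ, HasFDerivAt (F j) D x ∧ D (EuclideanSpace.single j 1) = s j x := by
    intro j x hx
    have hA := hasFDerivAt_norm_comp_rpow_of_ne (hud x) (α - 1) hx
    have hB := (hud x).hasFDerivAt.inner ℝ ((hwd j x)).hasFDerivAt
    refine ⟨_, hA.mul hB, ?_⟩
    simp only [ContinuousLinearMap.add_apply, ContinuousLinearMap.smul_apply,
      ContinuousLinearMap.comp_apply, ContinuousLinearMap.prod_apply, fderivInnerCLM_apply,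
      innerSL_apply_apply, smul_eq_mul]
    have e1 : fderiv ℝ u x (EuclideanSpace.single j 1) = pd u j x := rfl
    have e2 : fderiv ℝ (pd u j) x (EuclideanSpace.single j 1) = pd (pd u j) j x := rfl
    rw [e1, e2]
    -- now pure algebra
    have key : (α - 1) * ‖u x‖ ^ (α - 1 - 2) * ⟪u x, pd u j x⟫ * ⟪u x, pd u j x⟫
        = 4 * (α - 1) / (α + 1) ^ 2 * ‖pd N j x‖ ^ 2 := by
      rw [hpdN]
      have hne : (0:ℝ) < ‖u x‖ := norm_pos_iff.2 hx
      have h2 : (‖u x‖ ^ ((α + 1) / 2 - 2)) ^ 2 = ‖u x‖ ^ (α - 1 - 2) := by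
        rw [← Real.rpow_natCast (‖u x‖ ^ ((α + 1) / 2 - 2)) 2, ← Real.rpow_mul (norm_nonneg _)]
        congr 1
        push_cast
        ring
      rw [Real.norm_eq_abs, sq_abs, mul_pow, mul_pow, h2]
      have hα1pos : (α:ℝ) + 1 ≠ 0 := by linarith
      field_simp
      ring
    simp only [hs]
    rw [real_inner_self_eq_norm_sq]
    linear_combination key
  -- derivative of F j at zeros of u
  have hF_zero : ∀ (j : Fin 3) (x : E3), u x = 0 → HasFDerivAt (F j) (0 : E3 →L[ℝ] ℝ) x := by
    intro j x hx
    refine hasFDerivAt_zero_of_dominated (hud x) (by linarith : (1:ℝ) < α) hC1' hx ?_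
    intro y
    rcases eq_or_ne (u y) 0 with h | h
    · simp [hF, h, Real.zero_rpow (by linarith : α ≠ 0)]
    · have hpos : (0:ℝ) < ‖u y‖ := norm_pos_iff.2 h
      have : |F j y| = ‖u y‖ ^ (α - 1) * |⟪u y, pd u j y⟫| := by
        rw [hF, abs_mul, abs_of_nonneg (Real.rpow_nonneg (norm_nonneg _) _)]
      rw [this]
      calc ‖u y‖ ^ (α - 1) * |⟪u y, pd u j y⟫|
          ≤ ‖u y‖ ^ (α - 1) * (‖u y‖ * C1) := by
            refine mul_le_mul_of_nonneg_left ?_ (Real.rpow_nonneg (norm_nonneg _) _)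
            exact le_trans (abs_real_inner_le_norm _ _)
              (mul_le_mul_of_nonneg_left (hwb j y) (norm_nonneg _))
        _ = C1 * ‖u y‖ ^ α := by
            rw [show α = (α - 1) + 1 by ring, Real.rpow_add_one (ne_of_gt hpos)]
            ring
  have hdiffF : ∀ j, Differentiable ℝ (F j) := by
    intro j x
    rcases eq_or_ne (u x) 0 with h | h
    · exact (hF_zero j x h).differentiableAt
    · obtain ⟨D, hD, -⟩ := hF_ne j x h
      exact hD.differentiableAt
  have hfs : ∀ j x, fderiv ℝ (F j) x (EuclideanSpace.single j 1) = s j x := by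
    intro j x
    rcases eq_or_ne (u x) 0 with h | h
    · rw [(hF_zero j x h).fderiv, hs0 j x h]
      simp
    · obtain ⟨D, hD, hval⟩ := hF_ne j x h
      rw [hD.fderiv, hval]
  -- continuity and compact support
  have hNrm : Continuous fun x : E3 => ‖u x‖ ^ (α - 1) :=
    hud.continuous.norm.rpow_const (fun x => Or.inr (by linarith))
  have hFcont : ∀ j, Continuous (F j) := by
    intro j
    exact hNrm.mul (hud.continuous.inner (hwcont j))
  have hFsupp : ∀ j, HasCompactSupport (F j) := by
    intro j
    refine hsupp.mono (fun x hx => ?_)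
    simp only [Function.mem_support] at hx ⊢
    intro h
    exact hx (by simp [hF, h])
  have hiF : ∀ j, Integrable (F j) := fun j => (hFcont j).integrable_of_hasCompactSupport (hFsupp j)
  have hscont : ∀ j, Continuous (s j) := by
    intro j
    refine Continuous.add (continuous_const.mul ((hpdNcont j).norm.pow 2))
      (hNrm.mul (Continuous.add ((hwcont j).norm.pow 2) (hud.continuous.inner (hw2cont j))))
  have hssupp : ∀ j, HasCompactSupport (s j) := by
    intro j
    refine hsupp.mono (fun x hx => ?_)
    simp only [Function.mem_support] at hx ⊢
    intro h
    exact hx (hs0 j x h)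
  have his : ∀ j, Integrable (s j) := fun j => (hscont j).integrable_of_hasCompactSupport (hssupp j)
  -- each ∫ s j = 0
  have h0 : ∀ j, (∫ x, s j x) = 0 := by
    intro j
    have heq : (fun x => fderiv ℝ (F j) x (EuclideanSpace.single j 1)) = s j := funext (hfs j)
    have := integral_pd_eq_zero' (hdiffF j) (hiF j) (EuclideanSpace.single j 1)
      (by rw [heq]; exact his j)
    rwa [heq] at this
  have hsum0 : (∫ x, ∑ j, s j x) = 0 := by
    rw [integral_finset_sum _ (fun j _ => his j)]
    simp [h0]
  -- the three integrands
  set I1 : E3 → ℝ := fun x => ‖u x‖ ^ (α - 1) * ⟪u x, lap u x⟫ with hI1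
  set I2 : E3 → ℝ := fun x => ‖u x‖ ^ (α - 1) * gradSq u x with hI2
  set I3 : E3 → ℝ := fun x => gradSq (fun y => ‖u y‖ ^ ((α + 1) / 2)) x with hI3
  have hI3N : I3 = fun x => ∑ j, ‖pd N j x‖ ^ 2 := by
    funext x
    simp [hI3, gradSq, hN]
  have hpt : ∀ x, (∑ j, s j x) = I1 x + I2 x + (4 * (α - 1) / (α + 1) ^ 2) * I3 x := by
    intro x
    simp only [hs, hI1, hI2, hI3N, gradSq, lap, Finset.sum_add_distrib, ← Finset.mul_sum,
      inner_sum]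
    ring
  -- integrability of the three integrands
  have hlapcont : Continuous (fun x => lap u x) := by
    unfold lap
    exact continuous_finset_sum _ (fun j _ => hw2cont j)
  have hiI1 : Integrable I1 := by
    refine (hNrm.mul (hud.continuous.inner hlapcont)).integrable_of_hasCompactSupport ?_
    refine hsupp.mono (fun x hx => ?_)
    simp only [Function.mem_support] at hx ⊢
    intro h
    exact hx (by simp [hI1, h])
  have hgradSqcont : Continuous (fun x => gradSq u x) := by
    unfold gradSq
    exact continuous_finset_sum _ (fun j _ => ((hwcont j).norm.pow 2))
  have hiI2 : Integrable I2 := by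
    refine (hNrm.mul hgradSqcont).integrable_of_hasCompactSupport ?_
    refine hsupp.mono (fun x hx => ?_)
    simp only [Function.mem_support] at hx ⊢
    intro h
    exact hx (by simp [hI2, h, Real.zero_rpow hα1'])
  have hiI3 : Integrable I3 := by
    rw [hI3N]
    refine (continuous_finset_sum _ (fun j _ => ((hpdNcont j).norm.pow 2))).integrable_of_hasCompactSupport ?_
    refine hsupp.mono (fun x hx => ?_)
    simp only [Function.mem_support] at hx ⊢
    intro h
    refine hx ?_
    simp [hpdN0 _ x h]
  -- put it together
  have h2 : (∫ x, (I1 x + I2 x + (4 * (α - 1) / (α + 1) ^ 2) * I3 x)) = 0 := by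
    rw [← hsum0]
    exact integral_congr_ae (Filter.Eventually.of_forall (fun x => (hpt x).symm))
  have hI12 : Integrable (fun x => I1 x + I2 x) := hiI1.add hiI2
  have hcI3 : Integrable (fun x => (4 * (α - 1) / (α + 1) ^ 2) * I3 x) := hiI3.const_mul _
  rw [integral_add hI12 hcI3, integral_add hiI1 hiI2, integral_const_mul] at h2
  have hg1 : (∫ x : E3, ‖u x‖ ^ (α - 1) * ⟪u x, lap u x⟫) = ∫ x, I1 x := rfl
  have hg2 : (∫ x : E3, ‖u x‖ ^ (α - 1) * gradSq u x) = ∫ x, I2 x := rfl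
  have hg3 : (∫ x : E3, gradSq (fun y => ‖u y‖ ^ ((α + 1) / 2)) x) = ∫ x, I3 x := rfl
  rw [hg1, hg2, hg3]
  linarith [h2]
end
end

section
/- Let $T^*\in(0,\infty]$, let $f,g\colon[0,T^*)\to\mathbb{R}$ be differentiable, and let $h\colon[0,T^*)\to\mathbb{R}$ be continuous with $h(t)\ge 0$ for all $t$. Suppose there are constants $c_1,c_2\in\mathbb{R}$ with $f(0)<c_1$ and $g(0)<c_2$ such that for every $t\in[0,T^*)$: if $f(t)<c_1$ and $g(t)<c_2$, then $f'(t)+h(t)\le 0$ and $g'(t)\le 0$. Then for every $T\in[0,T^*)$ one has $g(T)\le g(0)$ and $f(T)+\int_0^T h(t)\,dt\le f(0)$; in particular $\int_0^T h(t)\,dt\le f(0)-f(T)$. -/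
open Set

/-- Barrier lemma with dissipation on `[0, T*)`, `T* ∈ (0, ∞]`: if
`f(0) < c₁`, `g(0) < c₂`, `h ≥ 0` is continuous, and at every time where `f < c₁` and
`g < c₂` one has `f' + h ≤ 0` and `g' ≤ 0`, then for every `T ∈ [0, T*)`:
`g(T) ≤ g(0)` and `f(T) + ∫₀ᵀ h ≤ f(0)`, in particular `∫₀ᵀ h ≤ f(0) - f(T)`. -/
theorem barrier_lemma_with_dissipation (Tstar : EReal) (hTstar : 0 < Tstar)
    (f g h : ℝ → ℝ) (c₁ c₂ : ℝ)
    (hf : DifferentiableOn ℝ f {t : ℝ | 0 ≤ t ∧ (t : EReal) < Tstar})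
    (hg : DifferentiableOn ℝ g {t : ℝ | 0 ≤ t ∧ (t : EReal) < Tstar})
    (hh : ContinuousOn h {t : ℝ | 0 ≤ t ∧ (t : EReal) < Tstar})
    (hhpos : ∀ t : ℝ, 0 ≤ t → (t : EReal) < Tstar → 0 ≤ h t)
    (hf0 : f 0 < c₁) (hg0 : g 0 < c₂)
    (hstep : ∀ t : ℝ, 0 ≤ t → (t : EReal) < Tstar → f t < c₁ → g t < c₂ →
      derivWithin f {s : ℝ | 0 ≤ s ∧ (s : EReal) < Tstar} t + h t ≤ 0 ∧
      derivWithin g {s : ℝ | 0 ≤ s ∧ (s : EReal) < Tstar} t ≤ 0) :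
    ∀ T : ℝ, 0 ≤ T → (T : EReal) < Tstar →
      g T ≤ g 0 ∧ f T + (∫ t in (0:ℝ)..T, h t) ≤ f 0 ∧
        (∫ t in (0:ℝ)..T, h t) ≤ f 0 - f T := by
  set S : Set ℝ := {t : ℝ | 0 ≤ t ∧ (t : EReal) < Tstar} with hSdef
  intro T hT0 hTlt
  have hIccS : Icc (0:ℝ) T ⊆ S := by
    intro t ht
    exact ⟨ht.1, lt_of_le_of_lt (by exact_mod_cast ht.2) hTlt⟩
  -- open neighborhoods inside S for points of `Ioo 0 T`
  have hnhdsO : ∀ t ∈ Ioo (0:ℝ) T, ∃ U : Set ℝ, IsOpen U ∧ t ∈ U ∧ U ⊆ S := by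
    intro t ht
    obtain ⟨τ, hτ1, hτ2⟩ := EReal.lt_iff_exists_real_btwn.mp
      (lt_of_le_of_lt (show (t : EReal) ≤ (T : EReal) by exact_mod_cast ht.2.le) hTlt)
    refine ⟨Ioo 0 τ, isOpen_Ioo, ⟨ht.1, by exact_mod_cast hτ1⟩, ?_⟩
    intro s hs
    exact ⟨hs.1.le, lt_of_lt_of_le (by exact_mod_cast hs.2) hτ2.le⟩
  have hnhds : ∀ t ∈ Ioo (0:ℝ) T, S ∈ nhds t := by
    intro t ht
    obtain ⟨U, hUo, htU, hUS⟩ := hnhdsO t ht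
    exact Filter.mem_of_superset (hUo.mem_nhds htU) hUS
  have hdf : ∀ t ∈ Ioo (0:ℝ) T, DifferentiableAt ℝ f t ∧ derivWithin f S t = deriv f t :=
    fun t ht => ⟨hf.differentiableAt (hnhds t ht), derivWithin_of_mem_nhds (hnhds t ht)⟩
  have hdg : ∀ t ∈ Ioo (0:ℝ) T, DifferentiableAt ℝ g t ∧ derivWithin g S t = deriv g t :=
    fun t ht => ⟨hg.differentiableAt (hnhds t ht), derivWithin_of_mem_nhds (hnhds t ht)⟩
  -- the barrier: f < c₁ and g < c₂ on [0, T]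
  have key : ∀ t ∈ Icc (0:ℝ) T, f t < c₁ ∧ g t < c₂ := by
    by_contra hcon
    push_neg at hcon
    set B : Set ℝ := {t ∈ Icc (0:ℝ) T | c₁ ≤ f t ∨ c₂ ≤ g t} with hBdef
    have hBne : B.Nonempty := by
      obtain ⟨t, htIcc, ht⟩ := hcon
      by_cases hft : f t < c₁
      · exact ⟨t, htIcc, Or.inr (ht hft)⟩
      · exact ⟨t, htIcc, Or.inl (not_lt.mp hft)⟩
    have hBbdd : BddBelow B := ⟨0, fun t ht => ht.1.1⟩
    have hBclosed : IsClosed B := by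
      have h1 : IsClosed (Icc (0:ℝ) T ∩ f ⁻¹' Ici c₁) :=
        (hf.continuousOn.mono hIccS).preimage_isClosed_of_isClosed isClosed_Icc isClosed_Ici
      have h2 : IsClosed (Icc (0:ℝ) T ∩ g ⁻¹' Ici c₂) :=
        (hg.continuousOn.mono hIccS).preimage_isClosed_of_isClosed isClosed_Icc isClosed_Ici
      have : B = (Icc (0:ℝ) T ∩ f ⁻¹' Ici c₁) ∪ (Icc (0:ℝ) T ∩ g ⁻¹' Ici c₂) := by
        ext t
        simp only [hBdef, mem_setOf_eq, mem_union, mem_inter_iff, mem_preimage, mem_Ici]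
        tauto
      rw [this]
      exact h1.union h2
    set t₀ := sInf B with ht₀def
    have ht₀B : t₀ ∈ B := hBclosed.csInf_mem hBne hBbdd
    have ht₀Icc : t₀ ∈ Icc (0:ℝ) T := ht₀B.1
    have hlt : ∀ s, 0 ≤ s → s < t₀ → f s < c₁ ∧ g s < c₂ := by
      intro s hs0 hst
      by_contra hns
      push_neg at hns
      have hsB : s ∈ B := by
        refine ⟨⟨hs0, hst.le.trans ht₀Icc.2⟩, ?_⟩
        by_cases hfs : f s < c₁
        · exact Or.inr (hns hfs)
        · exact Or.inl (not_lt.mp hfs)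
      exact absurd (csInf_le hBbdd hsB) (not_le.mpr hst)
    have hIoo : Ioo (0:ℝ) t₀ ⊆ Ioo (0:ℝ) T := Ioo_subset_Ioo le_rfl ht₀Icc.2
    have hfanti : AntitoneOn f (Icc 0 t₀) := by
      apply antitoneOn_of_deriv_nonpos (convex_Icc _ _)
        (hf.continuousOn.mono ((Icc_subset_Icc le_rfl ht₀Icc.2).trans hIccS))
      · intro t ht
        rw [interior_Icc] at ht
        exact ((hdf t (hIoo ht)).1).differentiableWithinAt
      · intro t ht
        rw [interior_Icc] at ht
        have htS : t ∈ S := hIccS ⟨ht.1.le, (hIoo ht).2.le⟩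
        obtain ⟨hflt, hglt⟩ := hlt t ht.1.le ht.2
        have := (hstep t htS.1 htS.2 hflt hglt).1
        rw [(hdf t (hIoo ht)).2] at this
        have hhp := hhpos t htS.1 htS.2
        linarith
    have hganti : AntitoneOn g (Icc 0 t₀) := by
      apply antitoneOn_of_deriv_nonpos (convex_Icc _ _)
        (hg.continuousOn.mono ((Icc_subset_Icc le_rfl ht₀Icc.2).trans hIccS))
      · intro t ht
        rw [interior_Icc] at ht
        exact ((hdg t (hIoo ht)).1).differentiableWithinAt
      · intro t ht
        rw [interior_Icc] at ht
        have htS : t ∈ S := hIccS ⟨ht.1.le, (hIoo ht).2.le⟩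
        obtain ⟨hflt, hglt⟩ := hlt t ht.1.le ht.2
        have := (hstep t htS.1 htS.2 hflt hglt).2
        rw [(hdg t (hIoo ht)).2] at this
        exact this
    have hft₀ : f t₀ ≤ f 0 := hfanti (left_mem_Icc.mpr ht₀Icc.1) (right_mem_Icc.mpr ht₀Icc.1) ht₀Icc.1
    have hgt₀ : g t₀ ≤ g 0 := hganti (left_mem_Icc.mpr ht₀Icc.1) (right_mem_Icc.mpr ht₀Icc.1) ht₀Icc.1
    rcases ht₀B.2 with hfc | hgc
    · linarith
    · linarith
  -- integrability of h
  have hInt : ∀ t ∈ Icc (0:ℝ) T, IntervalIntegrable h MeasureTheory.volume 0 t := by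
    intro t ht
    apply ContinuousOn.intervalIntegrable
    rw [uIcc_of_le ht.1]
    exact hh.mono ((Icc_subset_Icc le_rfl ht.2).trans hIccS)
  -- derivative of the primitive
  have hprim : ∀ t ∈ Ioo (0:ℝ) T, HasDerivAt (fun u => ∫ s in (0:ℝ)..u, h s) (h t) t := by
    intro t ht
    obtain ⟨U, hUo, htU, hUS⟩ := hnhdsO t ht
    refine intervalIntegral.integral_hasDerivAt_right (hInt t ⟨ht.1.le, ht.2.le⟩) ?_ ?_
    · exact (hh.mono hUS).stronglyMeasurableAtFilter hUo t htU
    · exact (hh.mono hUS).continuousAt (hUo.mem_nhds htU)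
  -- continuity of the primitive on [0, T]
  have hprimcont : ContinuousOn (fun u => ∫ s in (0:ℝ)..u, h s) (Icc 0 T) := by
    have hinteg : MeasureTheory.IntegrableOn h (Icc 0 T) MeasureTheory.volume :=
      (hh.mono hIccS).integrableOn_compact isCompact_Icc
    have := intervalIntegral.continuousOn_primitive (μ := MeasureTheory.volume)
      (f := h) (a := 0) (b := T) hinteg
    refine this.congr ?_
    intro x hx
    show (∫ s in (0:ℝ)..x, h s) = _
    rw [intervalIntegral.integral_of_le hx.1]
  -- g is antitone on [0, T]
  have hganti : AntitoneOn g (Icc 0 T) := by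
    apply antitoneOn_of_deriv_nonpos (convex_Icc _ _) (hg.continuousOn.mono hIccS)
    · intro t ht
      rw [interior_Icc] at ht
      exact ((hdg t ht).1).differentiableWithinAt
    · intro t ht
      rw [interior_Icc] at ht
      have htS : t ∈ S := hIccS ⟨ht.1.le, ht.2.le⟩
      obtain ⟨hflt, hglt⟩ := key t ⟨ht.1.le, ht.2.le⟩
      have := (hstep t htS.1 htS.2 hflt hglt).2
      rwa [(hdg t ht).2] at this
  -- F = f + primitive is antitone on [0, T]
  have hFanti : AntitoneOn (fun u => f u + ∫ s in (0:ℝ)..u, h s) (Icc 0 T) := by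
    apply antitoneOn_of_deriv_nonpos (convex_Icc _ _)
      ((hf.continuousOn.mono hIccS).add hprimcont)
    · intro t ht
      rw [interior_Icc] at ht
      exact (((hdf t ht).1).add (hprim t ht).differentiableAt).differentiableWithinAt
    · intro t ht
      rw [interior_Icc] at ht
      have htS : t ∈ S := hIccS ⟨ht.1.le, ht.2.le⟩
      obtain ⟨hflt, hglt⟩ := key t ⟨ht.1.le, ht.2.le⟩
      have hstep' := (hstep t htS.1 htS.2 hflt hglt).1
      rw [(hdf t ht).2] at hstep'
      have hD : HasDerivAt (fun u => f u + ∫ s in (0:ℝ)..u, h s) (deriv f t + h t) t :=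
        ((hdf t ht).1.hasDerivAt).add (hprim t ht)
      rw [show (f + fun u => ∫ s in (0:ℝ)..u, h s) = (fun u => f u + ∫ s in (0:ℝ)..u, h s) from rfl, hD.deriv]
      exact hstep'
  have h0T : (0:ℝ) ∈ Icc (0:ℝ) T := left_mem_Icc.mpr hT0
  have hTT : T ∈ Icc (0:ℝ) T := right_mem_Icc.mpr hT0
  have hg' : g T ≤ g 0 := hganti h0T hTT hT0
  have hF' : f T + (∫ s in (0:ℝ)..T, h s) ≤ f 0 + ∫ s in (0:ℝ)..(0:ℝ), h s :=
    hFanti h0T hTT hT0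
  rw [intervalIntegral.integral_same, add_zero] at hF'
  exact ⟨hg', hF', by linarith⟩
end
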